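/- Let g : ℍ → ℂ be holomorphic and SL₂(ℤ)-invariant, i.e. g(γ·τ) = g(τ) for all γ ∈ SL₂(ℤ) and τ ∈ ℍ. Suppose g is transcendental over ℂ(z), i.e. there is no nonzero polynomial P ∈ ℂ[X,Y] with P(τ, g(τ)) = 0 for all τ ∈ ℍ. Then there exist no polynomials p, q ∈ ℂ[X,Y] with q(τ, g(τ)) not identically zero on ℍ such that g′(τ)·q(τ, g(τ)) = p(τ, g(τ)) for all τ ∈ ℍ; that is, g satisfies no first-order differential equation g′ = f(z, g) with f a rational function over ℂ. -/

import Mathlib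

open MvPolynomial

namespace Stmt2Aux

noncomputable section

abbrev Hs : Set ℂ := {z : ℂ | 0 < z.im}

lemma Hs_open : IsOpen Hs := isOpen_lt continuous_const Complex.continuous_im

lemma Hs_preconn : IsPreconnected Hs := (convex_halfSpace_im_gt 0).isPreconnected

/-- substitution X₀ ↦ X₀ + c -/
def sh (c : ℂ) : MvPolynomial (Fin 2) ℂ →ₐ[ℂ] MvPolynomial (Fin 2) ℂ :=
  bind₁ ![X 0 + C c, X 1]

/-- substitution X₀ ↦ x (partial evaluation) -/
def pe (x : ℂ) : MvPolynomial (Fin 2) ℂ →ₐ[ℂ] MvPolynomial (Fin 2) ℂ :=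
  bind₁ ![C x, X 1]

lemma sh_sh (c d : ℂ) (P : MvPolynomial (Fin 2) ℂ) : sh c (sh d P) = sh (c + d) P := by
  have h : (fun i => (bind₁ ![(X 0 : MvPolynomial (Fin 2) ℂ) + C c, X 1]) (![X 0 + C d, X 1] i))
      = ![X 0 + C (c + d), X 1] := by
    funext i; fin_cases i <;> simp [bind₁_X_right, algHom_C] <;> ring
  simp only [sh, bind₁_bind₁, h]

lemma sh_zero (P : MvPolynomial (Fin 2) ℂ) : sh 0 P = P := by
  have h : ![(X 0 : MvPolynomial (Fin 2) ℂ) + C 0, X 1] = X := by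
    funext i; fin_cases i <;> simp
  simp only [sh, h, bind₁_X_left, AlgHom.id_apply]

lemma sh_inj (c : ℂ) {P : MvPolynomial (Fin 2) ℂ} (h : sh c P = 0) : P = 0 := by
  have := congrArg (sh (-c)) h
  rw [sh_sh] at this
  simpa [sh_zero] using this

lemma pe_sh (y c : ℂ) (P : MvPolynomial (Fin 2) ℂ) : pe y (sh c P) = pe (y + c) P := by
  have h : (fun i => (bind₁ ![(C y : MvPolynomial (Fin 2) ℂ), X 1]) (![X 0 + C c, X 1] i))
      = ![C (y + c), X 1] := by
    funext i; fin_cases i <;> simp [bind₁_X_right, algHom_C]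
  simp only [pe, sh, bind₁_bind₁, h]

lemma pe_pe (y x : ℂ) (P : MvPolynomial (Fin 2) ℂ) : pe y (pe x P) = pe x P := by
  have h : (fun i => (bind₁ ![(C y : MvPolynomial (Fin 2) ℂ), X 1]) (![C x, X 1] i))
      = ![C x, X 1] := by
    funext i; fin_cases i <;> simp [bind₁_X_right, algHom_C]
  simp only [pe, bind₁_bind₁, h]

lemma eval_bind (v : Fin 2 → ℂ) (f : Fin 2 → MvPolynomial (Fin 2) ℂ) (P : MvPolynomial (Fin 2) ℂ) :
    eval v (bind₁ f P) = eval (fun i => eval v (f i)) P := by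
  rw [show (bind₁ f P) = aeval f P from rfl, aeval_def, MvPolynomial.algebraMap_eq,
    ← eval_assoc]
  rfl

lemma eval_sh (s t c : ℂ) (P : MvPolynomial (Fin 2) ℂ) :
    eval ![s, t] (sh c P) = eval ![s + c, t] P := by
  rw [sh, eval_bind]
  have h : (fun i => eval ![s, t] (![(X 0 : MvPolynomial (Fin 2) ℂ) + C c, X 1] i))
      = ![s + c, t] := by funext i; fin_cases i <;> simp
  rw [h]

lemma eval_pe (s t x : ℂ) (P : MvPolynomial (Fin 2) ℂ) :
    eval ![s, t] (pe x P) = eval ![x, t] P := by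
  rw [pe, eval_bind]
  have h : (fun i => eval ![s, t] (![(C x : MvPolynomial (Fin 2) ℂ), X 1] i))
      = ![x, t] := by funext i; fin_cases i <;> simp
  rw [h]

lemma eval_poly_onevar (s t : ℂ) (F : MvPolynomial (Fin 2) ℂ) :
    eval ![s, t] F =
      Polynomial.eval s (MvPolynomial.eval₂ Polynomial.C ![Polynomial.X, Polynomial.C t] F) := by
  have h := MvPolynomial.eval₂_comp_left (Polynomial.evalRingHom s) Polynomial.C
    ![Polynomial.X, Polynomial.C t] F
  have h2 : (Polynomial.evalRingHom s) ∘ ![Polynomial.X, Polynomial.C t] = ![s, t] := by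
    funext i; fin_cases i <;> simp
  have h1 : (Polynomial.evalRingHom s).comp Polynomial.C = RingHom.id ℂ := by
    ext a; simp
  rw [h1, h2, eval₂_id] at h
  exact h.symm

lemma vanish_zero (F : MvPolynomial (Fin 2) ℂ) (x₀ : ℂ)
    (h : ∀ n : ℕ, pe (x₀ + n) F = 0) : F = 0 := by
  apply MvPolynomial.funext
  intro v
  have hv : ![v 0, v 1] = v := by funext i; fin_cases i <;> rfl
  rw [map_zero, ← hv, eval_poly_onevar]
  set G := MvPolynomial.eval₂ Polynomial.C ![Polynomial.X, Polynomial.C (v 1)] F with hG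
  have hroots : ∀ n : ℕ, Polynomial.IsRoot G (x₀ + n) := by
    intro n
    have := congrArg (eval ![(0 : ℂ), v 1]) (h n)
    rw [eval_pe, map_zero] at this
    show Polynomial.eval (x₀ + (n : ℂ)) G = 0
    rw [hG, ← eval_poly_onevar]
    exact this
  have hGzero : G = 0 := by
    apply Polynomial.eq_zero_of_infinite_isRoot
    apply Set.infinite_of_injective_forall_mem (f := fun n : ℕ => x₀ + (n : ℂ))
    · intro a b hab
      simpa using hab
    · intro n; exact hroots n
  rw [hGzero, Polynomial.eval_zero]

lemma analytic_eval {g : ℂ → ℂ} (hg : AnalyticOnNhd ℂ g Hs) (P : MvPolynomial (Fin 2) ℂ) :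
    AnalyticOnNhd ℂ (fun τ => eval ![τ, g τ] P) Hs := by
  induction P using MvPolynomial.induction_on with
  | C a => simpa using analyticOnNhd_const
  | add p q hp hq => simpa [Pi.add_def] using hp.add hq
  | mul_X p i hp =>
      have hi : AnalyticOnNhd ℂ (fun τ => ![τ, g τ] i) Hs := by
        fin_cases i
        · exact analyticOnNhd_id
        · exact hg
      simpa using hp.mul hi

lemma zero_of_mul {u v : ℂ → ℂ} (hu : AnalyticOnNhd ℂ u Hs) (hv : AnalyticOnNhd ℂ v Hs)
    (h : ∀ τ ∈ Hs, u τ * v τ = 0) (hne : ∃ τ ∈ Hs, u τ ≠ 0) : ∀ τ ∈ Hs, v τ = 0 := by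
  intro τ hτ
  by_contra hvτ
  have hev : ∀ᶠ z in nhds τ, u z = 0 := by
    have h1 : ∀ᶠ z in nhds τ, v z ≠ 0 := (hv τ hτ).continuousAt.eventually_ne hvτ
    have h2 : ∀ᶠ z in nhds τ, z ∈ Hs := Hs_open.mem_nhds hτ
    filter_upwards [h1, h2] with z h1 h2
    rcases mul_eq_zero.1 (h z h2) with h' | h'
    · exact h'
    · exact absurd h' h1
  obtain ⟨τ₀, hτ₀, hu0⟩ := hne
  exact hu0 (hu.eqOn_zero_of_preconnected_of_eventuallyEq_zero Hs_preconn hτ hev hτ₀)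

lemma mem_S {τ : ℂ} (hτ : τ ∈ Hs) : -τ⁻¹ ∈ Hs := by
  have hτ0 : τ ≠ 0 := by
    intro h
    rw [h] at hτ
    simp [Hs] at hτ
  have : (-τ⁻¹).im = τ.im / Complex.normSq τ := by
    rw [Complex.neg_im, Complex.inv_im]
    field_simp
  show 0 < (-τ⁻¹).im
  rw [this]
  exact div_pos hτ (Complex.normSq_pos.2 hτ0)

lemma deriv_T {g : ℂ → ℂ} (hper : ∀ z ∈ Hs, g (z + 1) = g z) {τ : ℂ} (hτ : τ ∈ Hs) :
    deriv g (τ + 1) = deriv g τ := by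
  have h1 : (fun z => g (z + 1)) =ᶠ[nhds τ] g := by
    filter_upwards [Hs_open.mem_nhds hτ] with z hz
    exact hper z hz
  calc deriv g (τ + 1) = deriv (fun z => g (z + 1)) τ := (deriv_comp_add_const g 1 τ).symm
    _ = deriv g τ := h1.deriv_eq

lemma deriv_S {g : ℂ → ℂ} (hg : DifferentiableOn ℂ g Hs)
    (hper : ∀ z ∈ Hs, g (-z⁻¹) = g z) {τ : ℂ} (hτ : τ ∈ Hs) :
    deriv g (-τ⁻¹) = τ ^ 2 * deriv g τ := by
  have hτ0 : τ ≠ 0 := by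
    intro h
    rw [h] at hτ
    simp [Hs] at hτ
  have hmem : -τ⁻¹ ∈ Hs := mem_S hτ
  have h1 : (fun z => g (-z⁻¹)) =ᶠ[nhds τ] g := by
    filter_upwards [Hs_open.mem_nhds hτ] with z hz
    exact hper z hz
  have hφ : HasDerivAt (fun z : ℂ => -z⁻¹) ((τ ^ 2)⁻¹) τ := by
    have := (hasDerivAt_inv hτ0).neg
    simp only [neg_neg] at this
    exact this
  have hgd : HasDerivAt g (deriv g (-τ⁻¹)) (-τ⁻¹) :=
    (hg.differentiableAt (Hs_open.mem_nhds hmem)).hasDerivAt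
  have hcomp : HasDerivAt (fun z => g (-z⁻¹)) (deriv g (-τ⁻¹) * (τ ^ 2)⁻¹) τ := hgd.comp τ hφ
  have h3 : deriv g (-τ⁻¹) * (τ ^ 2)⁻¹ = deriv g τ := by
    rw [← h1.deriv_eq, hcomp.deriv]
  field_simp at h3
  rw [show -τ⁻¹ = -(1 / τ) by rw [one_div], h3]

end
end Stmt2Aux

/-- A holomorphic `SL₂(ℤ)`-invariant function `g` on the upper half-plane
`ℍ = {τ : 0 < Im τ}` which is transcendental over `ℂ(z)` satisfies no first-order rational
differential equation `g' = p(z,g)/q(z,g)`. -/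
theorem statement_2 (g : ℂ → ℂ)
    (hg : DifferentiableOn ℂ g {z : ℂ | 0 < z.im})
    (hinv : ∀ a b c d : ℤ, a * d - b * c = 1 → ∀ τ : ℂ, 0 < τ.im →
      g (((a : ℂ) * τ + (b : ℂ)) / ((c : ℂ) * τ + (d : ℂ))) = g τ)
    (htr : ¬ ∃ P : MvPolynomial (Fin 2) ℂ, P ≠ 0 ∧
      ∀ τ : ℂ, 0 < τ.im → MvPolynomial.eval ![τ, g τ] P = 0) :
    ¬ ∃ p q : MvPolynomial (Fin 2) ℂ,
      (¬ ∀ τ : ℂ, 0 < τ.im → MvPolynomial.eval ![τ, g τ] q = 0) ∧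
      (∀ τ : ℂ, 0 < τ.im →
        deriv g τ * MvPolynomial.eval ![τ, g τ] q = MvPolynomial.eval ![τ, g τ] p) := by
  open Stmt2Aux in
  rintro ⟨p, q, hq0, heq⟩
  classical
  -- basic facts
  have hga : AnalyticOnNhd ℂ g Hs := hg.analyticOnNhd Hs_open
  have hzero : ∀ R : MvPolynomial (Fin 2) ℂ,
      (∀ τ : ℂ, 0 < τ.im → MvPolynomial.eval ![τ, g τ] R = 0) → R = 0 := by
    intro R hR
    by_contra hRne
    exact htr ⟨R, hRne, hR⟩
  have hqne : q ≠ 0 := by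
    intro h
    exact hq0 (by simp [h])
  -- the T functional equation
  have hT : ∀ z ∈ Hs, g (z + 1) = g z := by
    intro z hz
    have := hinv 1 1 0 1 (by ring) z hz
    simpa using this
  have hmemT : ∀ {z : ℂ}, z ∈ Hs → z + 1 ∈ Hs := by
    intro z hz
    show 0 < (z + 1).im
    simpa using hz
  -- the S functional equation
  have hS : ∀ z ∈ Hs, g (-z⁻¹) = g z := by
    intro z hz
    have := hinv 0 (-1) 1 0 (by ring) z hz
    have e : (((0 : ℤ) : ℂ) * z + ((-1 : ℤ) : ℂ)) / (((1 : ℤ) : ℂ) * z + ((0 : ℤ) : ℂ))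
        = -z⁻¹ := by
      push_cast
      rw [zero_mul, zero_add, one_mul, add_zero, neg_div, one_div]  -- (-1)/z = -z⁻¹
    rw [e] at this
    exact this
  -- Step 1: the basic shift identity  sh 1 p * q = p * sh 1 q
  have base : sh 1 p * q = p * sh 1 q := by
    have := hzero (sh 1 p * q - p * sh 1 q) ?_
    · linear_combination this
    intro τ hτ
    have hτ' : τ ∈ Hs := hτ
    have hτ1 : τ + 1 ∈ Hs := hmemT hτ'
    have e1 : MvPolynomial.eval ![τ, g τ] (sh 1 p) = MvPolynomial.eval ![τ + 1, g (τ + 1)] p := by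
      rw [eval_sh, hT τ hτ']
    have e2 : MvPolynomial.eval ![τ, g τ] (sh 1 q) = MvPolynomial.eval ![τ + 1, g (τ + 1)] q := by
      rw [eval_sh, hT τ hτ']
    have h1 := heq (τ + 1) hτ1
    have h2 := heq τ hτ
    have h3 : deriv g (τ + 1) = deriv g τ := deriv_T hT hτ'
    simp only [map_sub, map_mul, e1, e2]
    rw [← h1, ← h2, h3]
    ring
  -- Step 2: iterate the shift identity
  have iter : ∀ n : ℕ, sh n p * q = p * sh n q := by
    intro n
    induction n with
    | zero => simp [sh_zero]
    | succ n ih =>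
        have h1 : sh (n + 1) p * sh 1 q = sh 1 p * sh (n + 1) q := by
          have := congrArg (sh 1) ih
          simp only [map_mul, sh_sh] at this
          rw [show (1 : ℂ) + n = (n : ℂ) + 1 by ring] at this
          push_cast
          linear_combination this
        have hsq : sh 1 q ≠ 0 := fun h => hqne (sh_inj 1 h)
        have key : sh 1 q * (sh ((n : ℂ) + 1) p * q) = sh 1 q * (p * sh ((n : ℂ) + 1) q) := by
          calc sh 1 q * (sh ((n : ℂ) + 1) p * q) = (sh ((n : ℂ) + 1) p * sh 1 q) * q := by ring
            _ = (sh 1 p * sh ((n : ℂ) + 1) q) * q := by rw [h1]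
            _ = (sh 1 p * q) * sh ((n : ℂ) + 1) q := by ring
            _ = (p * sh 1 q) * sh ((n : ℂ) + 1) q := by rw [base]
            _ = sh 1 q * (p * sh ((n : ℂ) + 1) q) := by ring
        have := mul_left_cancel₀ hsq key
        push_cast
        exact this
  -- Step 3: choose x₀ with pe x₀ q ≠ 0
  have hx₀ : ∃ x₀ : ℂ, pe x₀ q ≠ 0 := by
    by_contra h
    push_neg at h
    apply hqne
    apply MvPolynomial.funext
    intro v
    have hv : ![v 0, v 1] = v := by funext i; fin_cases i <;> rfl
    rw [map_zero, ← hv]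
    have := congrArg (MvPolynomial.eval ![v 0, v 1]) (h (v 0))
    rw [eval_pe, map_zero] at this
    exact this
  obtain ⟨x₀, hx₀⟩ := hx₀
  -- Step 4: p * pe x₀ q = q * pe x₀ p
  have key : p * pe x₀ q = q * pe x₀ p := by
    have hF : p * pe x₀ q - q * pe x₀ p = 0 := by
      apply vanish_zero _ x₀
      intro n
      have h2 := congrArg (pe x₀) (iter n)
      simp only [map_mul, pe_sh] at h2
      rw [map_sub, map_mul, map_mul, pe_pe, pe_pe]
      linear_combination h2
    linear_combination hF
  -- Step 5: on-curve identity
  have curve : ∀ τ ∈ Hs, MvPolynomial.eval ![τ, g τ] q *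
      (deriv g τ * MvPolynomial.eval ![τ, g τ] (pe x₀ q)
        - MvPolynomial.eval ![τ, g τ] (pe x₀ p)) = 0 := by
    intro τ hτ
    have h1 := congrArg (MvPolynomial.eval ![τ, g τ]) key
    simp only [map_mul] at h1
    have h2 := heq τ hτ
    linear_combination MvPolynomial.eval ![τ, g τ] (pe x₀ q) * h2 + h1
  -- Step 6: deriv g τ * B̂ τ = Â τ on Hs
  have hDE : ∀ τ ∈ Hs, deriv g τ * MvPolynomial.eval ![τ, g τ] (pe x₀ q)
      = MvPolynomial.eval ![τ, g τ] (pe x₀ p) := by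
    intro τ hτ
    have hu : AnalyticOnNhd ℂ (fun τ => MvPolynomial.eval ![τ, g τ] q) Hs := analytic_eval hga q
    have hv : AnalyticOnNhd ℂ (fun τ => deriv g τ * MvPolynomial.eval ![τ, g τ] (pe x₀ q)
        - MvPolynomial.eval ![τ, g τ] (pe x₀ p)) Hs :=
      ((hga.deriv.mul (analytic_eval hga (pe x₀ q))).sub (analytic_eval hga (pe x₀ p)))
    have hne : ∃ τ ∈ Hs, MvPolynomial.eval ![τ, g τ] q ≠ 0 := by
      push_neg at hq0
      obtain ⟨τ', h1, h2⟩ := hq0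
      exact ⟨τ', h1, h2⟩
    have := zero_of_mul hu hv curve hne τ hτ
    linear_combination this
  -- Step 7: S-transformation kills the derivative
  have hkill : ∀ τ ∈ Hs, deriv g τ * MvPolynomial.eval ![τ, g τ] (pe x₀ q) = 0 := by
    intro τ hτ
    have hτ' : -τ⁻¹ ∈ Hs := mem_S hτ
    have e1 := hDE _ hτ'
    have eB : MvPolynomial.eval ![-τ⁻¹, g (-τ⁻¹)] (pe x₀ q)
        = MvPolynomial.eval ![τ, g τ] (pe x₀ q) := by
      rw [eval_pe, eval_pe, hS τ hτ]
    have eA : MvPolynomial.eval ![-τ⁻¹, g (-τ⁻¹)] (pe x₀ p)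
        = MvPolynomial.eval ![τ, g τ] (pe x₀ p) := by
      rw [eval_pe, eval_pe, hS τ hτ]
    rw [eB, eA, deriv_S hg hS hτ] at e1
    have e2 := hDE τ hτ
    -- τ² D B = A and D B = A, so (τ² - 1) * (D B) = 0
    have e3 : (τ ^ 2 - 1) * (deriv g τ * MvPolynomial.eval ![τ, g τ] (pe x₀ q)) = 0 := by
      linear_combination e1 - e2
    rcases mul_eq_zero.1 e3 with h | h
    · exfalso
      have : (τ - 1) * (τ + 1) = 0 := by linear_combination h
      rcases mul_eq_zero.1 this with h' | h'
      · have : τ = 1 := by linear_combination h'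
        rw [this] at hτ
        simp [Hs] at hτ
      · have : τ = -1 := by linear_combination h'
        rw [this] at hτ
        simp [Hs] at hτ
    · exact h
  -- Step 8: deriv g = 0 on Hs
  have hder0 : ∀ τ ∈ Hs, deriv g τ = 0 := by
    have hu : AnalyticOnNhd ℂ (fun τ => MvPolynomial.eval ![τ, g τ] (pe x₀ q)) Hs :=
      analytic_eval hga (pe x₀ q)
    have hne : ∃ τ ∈ Hs, MvPolynomial.eval ![τ, g τ] (pe x₀ q) ≠ 0 := by
      by_contra h
      push_neg at h
      exact hx₀ (hzero (pe x₀ q) fun τ hτ => h τ hτ)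
    exact zero_of_mul hu hga.deriv (fun τ hτ => by
      have := hkill τ hτ; linear_combination this) hne
  -- Step 9: g is constant on Hs
  have hI : Complex.I ∈ Hs := by
    show (0 : ℝ) < Complex.I.im
    simp
  have hconst : ∀ τ ∈ Hs, g τ = g Complex.I := by
    intro τ hτ
    apply (convex_halfSpace_im_gt 0).is_const_of_fderivWithin_eq_zero hg ?_ hτ hI
    intro x hx
    rw [fderivWithin_of_isOpen Hs_open hx]
    apply ContinuousLinearMap.ext_ring
    calc fderiv ℂ g x 1 = deriv g x := rfl
      _ = 0 := hder0 x hx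
      _ = (0 : ℂ →L[ℂ] ℂ) 1 := by simp
  -- Step 10: contradiction with transcendence
  apply htr
  refine ⟨X 1 - C (g Complex.I), ?_, ?_⟩
  · intro h
    have := congrArg (MvPolynomial.eval ![(0 : ℂ), g Complex.I + 1]) h
    simp at this
  · intro τ hτ
    have := hconst τ hτ
    simp [this]
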